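/- Let (X, F) be a set system with opR_r(F) = 0 (for some r ≥ 1). Then for every s ≥ 1 and n ≥ 0, ψ^s_F(n) ≤ (∑_{i=0}^{r−1} C(s,i))^n. -/

import Mathlib

/-- A leaf `ξ ∈ (2^s)^n` of a `2^s`-ary element tree `T` is properly labeled by `A ⊆ X`
if for all `j < n` and `i < s`, the `i`-th coordinate of the label of the initial segment
`ξ|_{[j]}` belongs to `A` iff `ξ(j)(i) = 1`. -/
def OpProper {X : Type*} {s : ℕ} (T : List (Fin s → Bool) → (Fin s → X)) {n : ℕ}
    (ξ : Fin n → (Fin s → Bool)) (A : Set X) : Prop :=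
  ∀ (j : Fin n) (i : Fin s), (T ((List.ofFn ξ).take j.1) i ∈ A ↔ ξ j i = true)

/-- There is a `2^s`-ary element tree of height `k` with labels from `X` in which every leaf
is properly labeled by some member of `F`. -/
def HasOpTree {X : Type*} (F : Set (Set X)) (s k : ℕ) : Prop :=
  ∃ T : List (Fin s → Bool) → (Fin s → X),
    ∀ ξ : Fin k → (Fin s → Bool), ∃ A ∈ F, OpProper T ξ A

/-- The `op_s` shatter function `ψ^s_F(n)`: the maximum number of leaves properly labeled by
members of `F` in a `2^s`-ary element tree of height `n`. -/
noncomputable def opShatter {X : Type*} (F : Set (Set X)) (s n : ℕ) : ℕ :=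
  sSup {m : ℕ | ∃ T : List (Fin s → Bool) → (Fin s → X),
    m = {ξ : Fin n → (Fin s → Bool) | ∃ A ∈ F, OpProper T ξ A}.ncard}

section Aux

open Finset

variable {X : Type*}

private noncomputable def goodF (F : Set (Set X)) (s n : ℕ)
    (T : List (Fin s → Bool) → (Fin s → X)) : Finset (Fin n → (Fin s → Bool)) :=
  (Set.toFinite {ξ : Fin n → (Fin s → Bool) | ∃ A ∈ F, OpProper T ξ A}).toFinset

private lemma mem_goodF {F : Set (Set X)} {s n : ℕ}
    {T : List (Fin s → Bool) → (Fin s → X)} {ξ : Fin n → (Fin s → Bool)} :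
    ξ ∈ goodF F s n T ↔ ∃ A ∈ F, OpProper T ξ A := Set.Finite.mem_toFinset _

private noncomputable def rootF (F : Set (Set X)) {s : ℕ} (x : Fin s → X) :
    Finset (Fin s → Bool) :=
  (Set.toFinite {b : Fin s → Bool | ∃ A ∈ F, ∀ i, (x i ∈ A ↔ b i = true)}).toFinset

private lemma mem_rootF {F : Set (Set X)} {s : ℕ} {x : Fin s → X} {b : Fin s → Bool} :
    b ∈ rootF F x ↔ ∃ A ∈ F, ∀ i, (x i ∈ A ↔ b i = true) := Set.Finite.mem_toFinset _

private lemma no_shattered_tuple (F : Set (Set X)) (r : ℕ)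
    (h : ¬ HasOpTree F r 1) (x : Fin r → X) :
    ∃ b : Fin r → Bool, ∀ A ∈ F, ∃ i, ¬ (x i ∈ A ↔ b i = true) := by
  by_contra hc
  push_neg at hc
  apply h
  refine ⟨fun _ => x, fun ξ => ?_⟩
  obtain ⟨A, hA, hAb⟩ := hc (ξ 0)
  refine ⟨A, hA, fun j i => ?_⟩
  have hj : j = 0 := Subsingleton.elim _ _
  subst hj
  simpa using hAb i

private lemma root_bound (F : Set (Set X)) (r s : ℕ)
    (hx : ∀ x : Fin r → X, ∃ b : Fin r → Bool, ∀ A ∈ F, ∃ i, ¬ (x i ∈ A ↔ b i = true))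
    (x : Fin s → X) :
    (rootF F x).card ≤ ∑ i ∈ Finset.range r, s.choose i := by
  classical
  set Bf := rootF F x with hBf
  set 𝒜 : Finset (Finset (Fin s)) := Bf.image (fun b => univ.filter (fun i => b i = true))
    with h𝒜
  have hinj : Set.InjOn (fun b : Fin s → Bool => univ.filter (fun i => b i = true)) Bf := by
    intro b _ b' _ hbe
    funext i
    have h2 := Finset.ext_iff.1 hbe i
    simp only [mem_filter, mem_univ, true_and] at h2
    exact Bool.coe_iff_coe.mp h2
  have hcard : Bf.card = 𝒜.card := (card_image_of_injOn hinj).symm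
  -- every set shattered by 𝒜 has size < r
  have hshat : ∀ I ∈ 𝒜.shatterer, I.card < r := by
    intro I hI
    by_contra hIr
    push_neg at hIr
    obtain ⟨J, hJI, hJr⟩ := Finset.exists_subset_card_eq hIr
    have hJ : 𝒜.Shatters J := (mem_shatterer.1 hI).mono_right hJI
    set e := J.orderIsoOfFin hJr with he
    obtain ⟨b, hb⟩ := hx (fun k => x (e k))
    -- realize pattern b on the tuple (x (e k))
    set t : Finset (Fin s) :=
      (univ.filter (fun k : Fin r => b k = true)).image (fun k => (e k : Fin s)) with ht
    have htJ : t ⊆ J := by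
      intro i hi
      simp only [ht, mem_image, mem_filter, mem_univ, true_and] at hi
      obtain ⟨k, _, rfl⟩ := hi
      exact (e k).2
    obtain ⟨u, hu𝒜, hJu⟩ := hJ htJ
    simp only [h𝒜, mem_image] at hu𝒜
    obtain ⟨b', hb'Bf, rfl⟩ := hu𝒜
    rw [hBf, mem_rootF] at hb'Bf
    obtain ⟨A, hA, hAb'⟩ := hb'Bf
    obtain ⟨k, hk⟩ := hb A hA
    apply hk
    have hek : (e k : Fin s) ∈ J := (e k).2
    have hmem : ((e k : Fin s) ∈ (J ∩ univ.filter (fun i => b' i = true)))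
        ↔ ((e k : Fin s) ∈ t) := by rw [hJu]
    simp only [mem_inter, mem_filter, mem_univ, true_and, hek, true_and] at hmem
    have hright : ((e k : Fin s) ∈ t) ↔ b k = true := by
      simp only [ht, mem_image, mem_filter, mem_univ, true_and]
      constructor
      · rintro ⟨k', hk', hkk'⟩
        have : k' = k := by
          have := Subtype.coe_injective hkk'
          exact e.injective this
        rwa [this] at hk'
      · intro hbk; exact ⟨k, hbk, rfl⟩
    rw [hAb' (e k), hmem, hright]
  have hsub : 𝒜.shatterer ⊆ (Finset.range r).biUnion (fun i => Finset.powersetCard i univ) := by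
    intro I hI
    rw [mem_biUnion]
    exact ⟨I.card, mem_range.2 (hshat I hI), mem_powersetCard.2 ⟨subset_univ _, rfl⟩⟩
  calc Bf.card = 𝒜.card := hcard
    _ ≤ 𝒜.shatterer.card := card_le_card_shatterer 𝒜
    _ ≤ ((Finset.range r).biUnion (fun i => Finset.powersetCard i univ)).card :=
        card_le_card hsub
    _ ≤ ∑ i ∈ Finset.range r, (Finset.powersetCard i (univ : Finset (Fin s))).card :=
        card_biUnion_le
    _ = ∑ i ∈ Finset.range r, s.choose i := by
        refine Finset.sum_congr rfl fun i _ => ?_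
        rw [card_powersetCard, card_univ, Fintype.card_fin]

set_option maxHeartbeats 1000000 in
private lemma good_bound (F : Set (Set X)) (r s : ℕ)
    (hx : ∀ x : Fin r → X, ∃ b : Fin r → Bool, ∀ A ∈ F, ∃ i, ¬ (x i ∈ A ↔ b i = true)) :
    ∀ (n : ℕ) (T : List (Fin s → Bool) → (Fin s → X)),
      (goodF F s n T).card ≤ (∑ i ∈ Finset.range r, s.choose i) ^ n := by
  intro n
  induction n with
  | zero =>
    intro T
    classical
    calc (goodF F s 0 T).card ≤ (Finset.univ : Finset (Fin 0 → Fin s → Bool)).card :=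
          card_le_card (subset_univ _)
      _ ≤ 1 := by simp
      _ ≤ _ := by simp
  | succ n ih =>
    intro T
    set K := ∑ i ∈ Finset.range r, s.choose i with hK
    have hsub : goodF F s (n+1) T ⊆ (rootF F (T [])).biUnion
        (fun b => (goodF F s n (fun l => T (b :: l))).image (fun ξ' : Fin n → (Fin s → Bool) => Fin.cons (α := fun _ => Fin s → Bool) b ξ')) := by
      intro ξ hξ
      rw [mem_goodF] at hξ
      obtain ⟨A, hA, hp⟩ := hξ
      rw [mem_biUnion]
      refine ⟨ξ 0, ?_, ?_⟩
      · exact mem_rootF.2 ⟨A, hA, fun i => by simpa using hp 0 i⟩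
      · rw [mem_image]
        refine ⟨Fin.tail ξ, ?_, Fin.cons_self_tail ξ⟩
        rw [mem_goodF]
        refine ⟨A, hA, fun j i => ?_⟩
        have h1 : (List.ofFn ξ).take (j.succ.1) = ξ 0 :: (List.ofFn (Fin.tail ξ)).take j.1 := by
          rw [List.ofFn_succ]
          rfl
        have h2 := hp j.succ i
        rw [h1] at h2
        exact h2
    have step1 := card_le_card hsub
    have step2 : ((rootF F (T [])).biUnion (fun b =>
        (goodF F s n (fun l => T (b :: l))).image
          (fun ξ' : Fin n → (Fin s → Bool) => Fin.cons (α := fun _ => Fin s → Bool) b ξ'))).card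
        ≤ ∑ b ∈ rootF F (T []),
            ((goodF F s n (fun l => T (b :: l))).image
              (fun ξ' : Fin n → (Fin s → Bool) => Fin.cons (α := fun _ => Fin s → Bool) b ξ')).card := card_biUnion_le
    have step12 := step1.trans step2
    calc (goodF F s (n+1) T).card
        ≤ ∑ b ∈ rootF F (T []),
            ((goodF F s n (fun l => T (b :: l))).image (fun ξ' : Fin n → (Fin s → Bool) => Fin.cons (α := fun _ => Fin s → Bool) b ξ')).card :=
          step12
      _ ≤ ∑ _b ∈ rootF F (T []), K ^ n :=
          Finset.sum_le_sum fun b _ => card_image_le.trans (ih _)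
      _ = (rootF F (T [])).card * K ^ n := by rw [Finset.sum_const, smul_eq_mul]
      _ ≤ K * K ^ n := Nat.mul_le_mul_right _ (root_bound F r s hx (T []))
      _ = K ^ (n + 1) := (pow_succ' K n).symm

end Aux

/-- If `opR_r(F) = 0` (with `r ≥ 1`), then for every `s ≥ 1` and `n ≥ 0`,
`ψ^s_F(n) ≤ (∑_{i=0}^{r−1} C(s,i))^n`. -/
theorem op_rank_zero_shatter_bound {X : Type*} (F : Set (Set X)) (r : ℕ) (hr : 1 ≤ r)
    (hrank : HasOpTree F r 0 ∧ ∀ m : ℕ, 0 < m → ¬ HasOpTree F r m)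
    (s n : ℕ) (hs : 1 ≤ s) :
    opShatter F s n ≤ (∑ i ∈ Finset.range r, s.choose i) ^ n := by
  have hx := no_shattered_tuple F r (hrank.2 1 one_pos)
  refine csSup_le' ?_
  rintro m ⟨T, rfl⟩
  rw [Set.ncard_eq_toFinset_card _ (Set.toFinite _)]
  exact good_bound F r s hx n T
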